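/- Let p ∈ (1,∞), β < 0, s₀ > 0, and let μ₁(β,s₀) < 0 be the first eigenvalue of the 1D Robin problem (|X'|^{p-2}X')' + μ|X|^{p-2}X = 0 on (0,s₀) with X'(0) = 0 and |X'(s₀)|^{p-2}X'(s₀) + β|X(s₀)|^{p-2}X(s₀) = 0. Then μ₁(β, s₀) ≤ -(p-1)|β|^{p/(p-1)}. -/
import Mathlib


open Real

theorem mu1_negative_upper_bound (p : ℝ) (hp : 1 < p) (β s₀ : ℝ) (hβ : β < 0) (hs₀ : 0 < s₀)
    (p' : ℝ) (hp' : p' = p / (p - 1))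
    (arccoshp : ℝ → ℝ)
    (harccosh : ∀ x, 1 ≤ x → arccoshp x = ∫ t in (1:ℝ)..x, (t ^ p - 1) ^ (-(1/p)))
    (coshp : ℝ → ℝ)
    (hcosh : ∀ t, 0 ≤ t → 1 ≤ coshp t ∧ arccoshp (coshp t) = t)
    (μ₁ : ℝ) (hμ₁neg : μ₁ < 0)
    (hμ₁ : -μ₁ / (p - 1) =
      |β| ^ p' / (1 - (coshp ((-μ₁ / (p - 1)) ^ (1/p) * s₀)) ^ (-p))) :
    μ₁ ≤ -(p - 1) * |β| ^ (p / (p - 1)) := by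
  have hp1 : (0:ℝ) < p - 1 := by linarith
  set A : ℝ := -μ₁ / (p - 1) with hA
  have hApos : 0 < A := div_pos (by linarith) hp1
  have harg : 0 ≤ A ^ (1/p) * s₀ :=
    mul_nonneg (Real.rpow_nonneg hApos.le _) hs₀.le
  set c : ℝ := coshp (A ^ (1/p) * s₀) with hc
  have hc1 : 1 ≤ c := (hcosh _ harg).1
  have hcp : c ^ (-p) ≤ 1 :=
    Real.rpow_le_one_of_one_le_of_nonpos hc1 (by linarith)
  have hBpos : 0 < |β| ^ p' := Real.rpow_pos_of_pos (abs_pos.mpr hβ.ne) _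
  set d : ℝ := 1 - c ^ (-p) with hd
  have hdpos : 0 < d := by
    by_contra h
    push_neg at h
    rcases lt_or_eq_of_le h with h' | h'
    · have : |β| ^ p' / d < 0 := div_neg_of_pos_of_neg hBpos h'
      rw [← hμ₁] at this; linarith
    · rw [h', div_zero] at hμ₁; linarith
  have hd1 : d ≤ 1 := by simp only [hd]; nlinarith [Real.rpow_nonneg (by linarith : (0:ℝ) ≤ c) (-p)]
  have hAB : |β| ^ p' ≤ A := by
    rw [hμ₁]
    rw [le_div_iff₀ hdpos]
    nlinarith
  rw [hp'] at hAB
  rw [hA, le_div_iff₀ hp1] at hAB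
  linarith
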